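/- Let r ∈ (0,1), L ∈ ℂ, and let W : ℕ → ℝ be increasing to ∞ with W(N) > 0 such that lim_{N→∞} W(N-1)/W(N) exists and lies in (0,1). If (x_n) is a bounded complex sequence with lim_{N→∞} E_{n≤N}^{Bin(r)}(x_n) = L, then lim_{N→∞} E_{n≤N}^{Bin(r)}(E_{k≤n}^W x_k) = L, where E_{k≤n}^W x_k = (1/W(n)) ∑_{k=1}^n (W(k) - W(k-1)) x_k. -/

import Mathlib

open Finset Filter

/-- The `N`-th `r`-binomial average of a complex sequence. -/
noncomputable def binAvg (r : ℝ) (N : ℕ) (x : ℕ → ℂ) : ℂ :=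
  ∑ n ∈ Finset.range (N + 1), (N.choose n : ℂ) * (r : ℂ) ^ n * ((1 : ℂ) - r) ^ (N - n) * x n

/-- The right-shift operator on sequences. -/
def shiftOp (x : ℕ → ℂ) : ℕ → ℂ := fun n => if n = 0 then 0 else x (n - 1)

lemma binAvg_add (r : ℝ) (N : ℕ) (f g : ℕ → ℂ) :
    binAvg r N (fun n => f n + g n) = binAvg r N f + binAvg r N g := by
  simp [binAvg, mul_add, Finset.sum_add_distrib]

lemma binAvg_const_mul (r : ℝ) (N : ℕ) (c : ℂ) (f : ℕ → ℂ) :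
    binAvg r N (fun n => c * f n) = c * binAvg r N f := by
  simp only [binAvg, Finset.mul_sum]
  exact Finset.sum_congr rfl fun n _ => by ring

lemma weight_sum (r : ℝ) (N : ℕ) :
    ∑ n ∈ Finset.range (N+1), (N.choose n : ℝ) * r ^ n * (1 - r) ^ (N - n) = 1 := by
  have h := add_pow r (1 - r) N
  rw [show r + (1 - r) = 1 by ring, one_pow] at h
  calc ∑ n ∈ Finset.range (N+1), (N.choose n : ℝ) * r ^ n * (1 - r) ^ (N - n)
      = ∑ n ∈ Finset.range (N+1), r ^ n * (1 - r) ^ (N - n) * (N.choose n : ℝ) :=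
        Finset.sum_congr rfl fun n _ => by ring
    _ = 1 := h.symm

lemma weight_nonneg {r : ℝ} (hr0 : 0 ≤ r) (hr1 : r ≤ 1) (N n : ℕ) :
    0 ≤ (N.choose n : ℝ) * r ^ n * (1 - r) ^ (N - n) := by
  have : 0 ≤ 1 - r := by linarith
  positivity

lemma binAvg_norm_le_sum {r : ℝ} (N : ℕ) (f : ℕ → ℂ) :
    ‖binAvg r N f‖ ≤ ∑ n ∈ Finset.range (N+1),
      |(N.choose n : ℝ) * r ^ n * (1 - r) ^ (N - n)| * ‖f n‖ := by
  refine (norm_sum_le _ _).trans (le_of_eq ?_)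
  refine Finset.sum_congr rfl fun n _ => ?_
  have hc : (N.choose n : ℂ) * (r : ℂ) ^ n * ((1:ℂ) - r) ^ (N - n)
      = (((N.choose n : ℝ) * r ^ n * (1 - r) ^ (N - n) : ℝ) : ℂ) := by push_cast; ring
  rw [hc, norm_mul, Complex.norm_real, Real.norm_eq_abs]

lemma binAvg_norm_le {r : ℝ} (hr0 : 0 ≤ r) (hr1 : r ≤ 1) (N : ℕ) (f : ℕ → ℂ)
    (C : ℝ) (hC : ∀ n, ‖f n‖ ≤ C) : ‖binAvg r N f‖ ≤ C := by
  refine (binAvg_norm_le_sum N f).trans ?_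
  calc ∑ n ∈ Finset.range (N+1), |(N.choose n : ℝ) * r ^ n * (1 - r) ^ (N - n)| * ‖f n‖
      ≤ ∑ n ∈ Finset.range (N+1), ((N.choose n : ℝ) * r ^ n * (1 - r) ^ (N - n)) * C := by
        refine Finset.sum_le_sum fun n _ => ?_
        rw [abs_of_nonneg (weight_nonneg hr0 hr1 N n)]
        exact mul_le_mul_of_nonneg_left (hC n) (weight_nonneg hr0 hr1 N n)
    _ = C := by rw [← Finset.sum_mul, weight_sum]; ring

lemma weight_tendsto_zero {r : ℝ} (hr : r ∈ Set.Ioo (0:ℝ) 1) (n : ℕ) :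
    Tendsto (fun N => (N.choose n : ℝ) * r ^ n * (1 - r) ^ (N - n)) atTop (nhds 0) := by
  obtain ⟨hr0, hr1⟩ := hr
  have h1r : 0 < 1 - r := by linarith
  have hg : Tendsto (fun N : ℕ => (r / (1-r)) ^ n * ((N:ℝ) ^ n * (1 - r) ^ N))
      atTop (nhds 0) := by
    have := (tendsto_pow_const_mul_const_pow_of_lt_one n (le_of_lt h1r) (by linarith)).const_mul
      ((r / (1-r)) ^ n)
    simpa using this
  apply squeeze_zero' (g := fun N : ℕ => (r / (1-r)) ^ n * ((N:ℝ) ^ n * (1 - r) ^ N))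
  · filter_upwards with N
    positivity
  · filter_upwards [eventually_ge_atTop n] with N hN
    have hch : (N.choose n : ℝ) ≤ (N:ℝ) ^ n := by
      exact_mod_cast Nat.cast_le.mpr (Nat.choose_le_pow N n)
    have hpow : (1 - r) ^ (N - n) = (1 - r) ^ N / (1 - r) ^ n :=
      pow_sub₀ _ (ne_of_gt h1r) hN
    rw [hpow]
    rw [div_eq_mul_inv]
    have key : (N.choose n : ℝ) * r ^ n * ((1 - r) ^ N * ((1 - r) ^ n)⁻¹)
        ≤ (N:ℝ) ^ n * r ^ n * ((1 - r) ^ N * ((1 - r) ^ n)⁻¹) := by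
      apply mul_le_mul_of_nonneg_right (mul_le_mul_of_nonneg_right hch (by positivity))
      positivity
    refine key.trans (le_of_eq ?_)
    rw [div_pow]
    field_simp
  · exact hg

lemma binAvg_null {r : ℝ} (hr : r ∈ Set.Ioo (0:ℝ) 1) (f : ℕ → ℂ)
    (C : ℝ) (hC : ∀ n, ‖f n‖ ≤ C) (hf : Tendsto f atTop (nhds 0)) :
    Tendsto (fun N => binAvg r N f) atTop (nhds 0) := by
  have hr0 : (0:ℝ) ≤ r := le_of_lt hr.1
  have hr1 : r ≤ 1 := le_of_lt hr.2
  rw [NormedAddCommGroup.tendsto_nhds_zero]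
  intro ε hε
  obtain ⟨M, hM⟩ := (eventually_atTop).mp
    ((NormedAddCommGroup.tendsto_nhds_zero.mp hf) (ε/2) (by positivity))
  have hhead : Tendsto (fun N => ∑ n ∈ Finset.range M,
      ((N.choose n : ℝ) * r ^ n * (1 - r) ^ (N - n)) * C) atTop (nhds 0) := by
    have := tendsto_finset_sum (Finset.range M)
      (fun n _ => (weight_tendsto_zero hr n).mul_const C)
    simpa using this
  filter_upwards [hhead.eventually_lt_const (by positivity : (0:ℝ) < ε/2),
    eventually_ge_atTop M] with N hN1 hN2
  set w : ℕ → ℝ := fun n => (N.choose n : ℝ) * r ^ n * (1 - r) ^ (N - n) with hw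
  have step1 : ‖binAvg r N f‖ ≤ ∑ n ∈ Finset.range (N+1), w n * ‖f n‖ := by
    refine (binAvg_norm_le_sum N f).trans (le_of_eq (Finset.sum_congr rfl fun n _ => ?_))
    rw [abs_of_nonneg (weight_nonneg hr0 hr1 N n)]
  have step2 : ∑ n ∈ Finset.range (N+1), w n * ‖f n‖
      ≤ ∑ n ∈ Finset.range (N+1), (w n * (ε/2) + (if n < M then w n * C else 0)) := by
    refine Finset.sum_le_sum fun n _ => ?_
    by_cases hn : n < M
    · rw [if_pos hn]
      have : w n * ‖f n‖ ≤ w n * C :=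
        mul_le_mul_of_nonneg_left (hC n) (weight_nonneg hr0 hr1 N n)
      have hw0 : 0 ≤ w n := weight_nonneg hr0 hr1 N n
      have h2 : 0 ≤ w n * (ε/2) := mul_nonneg hw0 (by positivity)
      linarith
    · rw [if_neg hn, add_zero]
      exact mul_le_mul_of_nonneg_left (le_of_lt (hM n (le_of_not_gt hn)))
        (weight_nonneg hr0 hr1 N n)
  have step3 : ∑ n ∈ Finset.range (N+1), (w n * (ε/2) + (if n < M then w n * C else 0))
      = ε/2 + ∑ n ∈ Finset.range M, w n * C := by
    rw [Finset.sum_add_distrib]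
    congr 1
    · rw [← Finset.sum_mul, weight_sum r N, one_mul]
    · rw [← Finset.sum_subset (Finset.range_subset_range.mpr (by omega : M ≤ N+1))]
      · exact Finset.sum_congr rfl fun n hn => if_pos (Finset.mem_range.mp hn)
      · intro n _ hn
        rw [if_neg (by simpa using hn)]
  calc ‖binAvg r N f‖ ≤ ε/2 + ∑ n ∈ Finset.range M, w n * C := by
        rw [← step3]; exact step1.trans step2
    _ < ε/2 + ε/2 := by linarith
    _ = ε := by ring

lemma binAvg_pascal (r : ℝ) (N : ℕ) (x : ℕ → ℂ) :
    binAvg r (N+1) x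
      = ((1:ℂ) - r) * binAvg r N x + (r:ℂ) * binAvg r N (fun n => x (n+1)) := by
  have key : ∀ i ∈ Finset.range (N+1),
      (((N+1).choose (i+1) : ℂ)) * (r:ℂ)^(i+1) * ((1:ℂ)-r)^(N+1-(i+1)) * x (i+1)
        = (r:ℂ) * ((N.choose i : ℂ) * (r:ℂ)^i * ((1:ℂ)-r)^(N-i) * x (i+1))
          + (N.choose (i+1) : ℂ) * (r:ℂ)^(i+1) * ((1:ℂ)-r)^(N+1-(i+1)) * x (i+1) := by
    intro i hi
    have hsub : N + 1 - (i+1) = N - i := by omega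
    have hc : (((N+1).choose (i+1) : ℕ) : ℂ) = (N.choose i : ℂ) + (N.choose (i+1) : ℂ) := by
      rw [Nat.choose_succ_succ]; push_cast; ring
    rw [hsub, hc]; ring
  have e2 : (∑ i ∈ Finset.range (N+1),
        (N.choose (i+1) : ℂ) * (r:ℂ)^(i+1) * ((1:ℂ)-r)^(N+1-(i+1)) * x (i+1))
      + (N.choose 0 : ℂ) * (r:ℂ)^0 * ((1:ℂ)-r)^(N+1-0) * x 0
      = ∑ j ∈ Finset.range (N+2), (N.choose j : ℂ) * (r:ℂ)^j * ((1:ℂ)-r)^(N+1-j) * x j :=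
    (Finset.sum_range_succ' (fun j => (N.choose j : ℂ) * (r:ℂ)^j * ((1:ℂ)-r)^(N+1-j) * x j)
      (N+1)).symm
  have e3 : (∑ j ∈ Finset.range (N+2), (N.choose j : ℂ) * (r:ℂ)^j * ((1:ℂ)-r)^(N+1-j) * x j)
      = ((1:ℂ)-r) * binAvg r N x := by
    rw [Finset.sum_range_succ]
    have hz : ((N.choose (N+1) : ℕ) : ℂ) = 0 := by
      simp [Nat.choose_eq_zero_of_lt (by omega : N < N + 1)]
    rw [hz, zero_mul, zero_mul, zero_mul, add_zero, binAvg, Finset.mul_sum]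
    refine Finset.sum_congr rfl fun j hj => ?_
    have hj' : j ≤ N := by simpa [Nat.lt_succ_iff] using Finset.mem_range.mp hj
    have : N + 1 - j = (N - j) + 1 := by omega
    rw [this, pow_succ]
    ring
  calc binAvg r (N+1) x
      = (∑ i ∈ Finset.range (N+1),
          ((N+1).choose (i+1) : ℂ) * (r:ℂ)^(i+1) * ((1:ℂ)-r)^(N+1-(i+1)) * x (i+1))
        + ((N+1).choose 0 : ℂ) * (r:ℂ)^0 * ((1:ℂ)-r)^(N+1-0) * x 0 :=
        Finset.sum_range_succ'
          (fun n => ((N+1).choose n : ℂ) * (r:ℂ)^n * ((1:ℂ)-r)^(N+1-n) * x n) (N+1)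
    _ = (∑ i ∈ Finset.range (N+1),
          ((r:ℂ) * ((N.choose i : ℂ) * (r:ℂ)^i * ((1:ℂ)-r)^(N-i) * x (i+1))
            + (N.choose (i+1) : ℂ) * (r:ℂ)^(i+1) * ((1:ℂ)-r)^(N+1-(i+1)) * x (i+1)))
        + (N.choose 0 : ℂ) * (r:ℂ)^0 * ((1:ℂ)-r)^(N+1-0) * x 0 := by
        rw [Finset.sum_congr rfl key]
        norm_num
    _ = (r:ℂ) * binAvg r N (fun n => x (n+1))
        + ((∑ i ∈ Finset.range (N+1),
            (N.choose (i+1) : ℂ) * (r:ℂ)^(i+1) * ((1:ℂ)-r)^(N+1-(i+1)) * x (i+1))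
          + (N.choose 0 : ℂ) * (r:ℂ)^0 * ((1:ℂ)-r)^(N+1-0) * x 0) := by
        rw [Finset.sum_add_distrib, ← Finset.mul_sum, binAvg]
        ring
    _ = ((1:ℂ)-r) * binAvg r N x + (r:ℂ) * binAvg r N (fun n => x (n+1)) := by
        rw [e2, e3]; ring

lemma tendsto_of_contract (q : ℝ) (hq0 : 0 ≤ q) (hq1 : q < 1) (a : ℕ → ℂ) (L : ℂ)
    (C : ℝ) (hC : ∀ n, ‖a n‖ ≤ C)
    (he : Tendsto (fun N => a (N+1) - (q:ℂ) * a N) atTop (nhds (((1:ℂ) - (q:ℂ)) * L))) :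
    Tendsto a atTop (nhds L) := by
  set b : ℕ → ℂ := fun n => a n - L with hb
  set B : ℝ := C + ‖L‖ with hBdef
  have hbB : ∀ n, ‖b n‖ ≤ B := fun n =>
    (norm_sub_le _ _).trans (add_le_add_left (hC n) _)
  have herr : Tendsto (fun n => b (n+1) - (q:ℂ) * b n) atTop (nhds 0) := by
    have : (fun n => b (n+1) - (q:ℂ) * b n)
        = fun n => (a (n+1) - (q:ℂ) * a n) - ((1:ℂ) - (q:ℂ)) * L := by
      funext n; simp only [hb]; ring
    rw [this]
    simpa using he.sub_const (((1:ℂ) - (q:ℂ)) * L)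
  rw [tendsto_iff_norm_sub_tendsto_zero]
  rw [Metric.tendsto_atTop]
  intro ε hε
  have hδ : (0:ℝ) < (1 - q) * ε / 2 := by nlinarith
  obtain ⟨N₀, hN₀⟩ := (Metric.tendsto_atTop.mp herr) ((1 - q) * ε / 2) hδ
  have key : ∀ k, ‖b (N₀ + k)‖ ≤ q ^ k * B + ε / 2 := by
    intro k
    induction k with
    | zero => simpa using le_trans (hbB N₀) (by linarith)
    | succ k ih =>
      have hrec : ‖b (N₀ + k + 1)‖ ≤ q * ‖b (N₀ + k)‖ + (1 - q) * ε / 2 := by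
        have h1 := hN₀ (N₀ + k) (by omega)
        rw [dist_zero_right] at h1
        have h2 : ‖b (N₀ + k + 1)‖
            ≤ ‖(q:ℂ) * b (N₀ + k)‖ + ‖b (N₀ + k + 1) - (q:ℂ) * b (N₀ + k)‖ := by
          calc ‖b (N₀ + k + 1)‖
              = ‖(q:ℂ) * b (N₀ + k) + (b (N₀ + k + 1) - (q:ℂ) * b (N₀ + k))‖ := by ring_nf
            _ ≤ _ := norm_add_le _ _
        rw [norm_mul, Complex.norm_real, Real.norm_eq_abs, abs_of_nonneg hq0] at h2
        linarith
      have hidx : N₀ + (k+1) = N₀ + k + 1 := by omega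
      rw [hidx, pow_succ]
      have hq' : q * ‖b (N₀ + k)‖ ≤ q * (q ^ k * B + ε / 2) :=
        mul_le_mul_of_nonneg_left ih hq0
      calc ‖b (N₀ + k + 1)‖ ≤ q * (q ^ k * B + ε / 2) + (1 - q) * ε / 2 := by linarith
        _ ≤ q ^ k * q * B + ε / 2 := by nlinarith [pow_nonneg hq0 k, hbB N₀]
  have hpow : Tendsto (fun k : ℕ => q ^ k * B) atTop (nhds 0) := by
    simpa using (tendsto_pow_atTop_nhds_zero_of_lt_one hq0 hq1).mul_const B
  obtain ⟨K, hK⟩ := (Metric.tendsto_atTop.mp hpow) (ε / 2) (by linarith)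
  refine ⟨N₀ + K, fun n hn => ?_⟩
  have hk := hK (n - N₀) (by omega)
  rw [dist_zero_right, Real.norm_eq_abs] at hk
  have hkabs : q ^ (n - N₀) * B < ε / 2 := lt_of_le_of_lt (le_abs_self _) hk
  have hn' : n = N₀ + (n - N₀) := by omega
  rw [dist_zero_right, Real.norm_eq_abs, abs_of_nonneg (norm_nonneg _)]
  calc ‖a n - L‖ = ‖b (N₀ + (n - N₀))‖ := by rw [← hn']
    _ ≤ q ^ (n - N₀) * B + ε / 2 := key _
    _ < ε := by linarith

theorem stmt_13 (r : ℝ) (hr : r ∈ Set.Ioo (0:ℝ) 1) (L : ℂ)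
    (W : ℕ → ℝ) (hW : StrictMono W) (hWtop : Tendsto W atTop atTop)
    (hWpos : ∀ n, 0 < W n) (l : ℝ) (hl : l ∈ Set.Ioo (0:ℝ) 1)
    (hlim : Tendsto (fun N => W (N - 1) / W N) atTop (nhds l))
    (x : ℕ → ℂ) (hx : ∃ C, ∀ n, ‖x n‖ ≤ C)
    (h : Tendsto (fun N => binAvg r N x) atTop (nhds L)) :
    Tendsto (fun N => binAvg r N (fun n =>
        (1 / (W n : ℂ)) * ∑ k ∈ Finset.Icc 1 n, ((W k - W (k - 1) : ℝ) : ℂ) * x k))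
      atTop (nhds L) := by
  obtain ⟨hr0, hr1⟩ := hr
  obtain ⟨hl0, hl1⟩ := hl
  obtain ⟨C, hC⟩ := hx
  have hC0 : 0 ≤ C := (norm_nonneg _).trans (hC 0)
  set y : ℕ → ℂ := fun n =>
      (1 / (W n : ℂ)) * ∑ k ∈ Finset.Icc 1 n, ((W k - W (k - 1) : ℝ) : ℂ) * x k with hy
  -- telescoping sum of weights
  have htele : ∀ n, ∑ k ∈ Finset.Icc 1 n, (W k - W (k-1)) = W n - W 0 := by
    intro n
    induction n with
    | zero => simp
    | succ n ih =>
      rw [Finset.sum_Icc_succ_top (by omega : 1 ≤ n+1), ih]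
      simp only [Nat.add_sub_cancel]
      ring
  -- boundedness of y
  have hyb : ∀ n, ‖y n‖ ≤ C := by
    intro n
    have hWn : (0:ℝ) < W n := hWpos n
    have hS : ‖∑ k ∈ Finset.Icc 1 n, ((W k - W (k - 1) : ℝ) : ℂ) * x k‖ ≤ W n * C := by
      refine (norm_sum_le _ _).trans ?_
      calc ∑ k ∈ Finset.Icc 1 n, ‖((W k - W (k - 1) : ℝ) : ℂ) * x k‖
          ≤ ∑ k ∈ Finset.Icc 1 n, (W k - W (k-1)) * C := by
            refine Finset.sum_le_sum fun k hk => ?_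
            have hmono : W (k-1) ≤ W k := hW.monotone (Nat.sub_le k 1)
            rw [norm_mul, Complex.norm_real, Real.norm_eq_abs,
              abs_of_nonneg (by linarith)]
            exact mul_le_mul_of_nonneg_left (hC k) (by linarith)
        _ = (W n - W 0) * C := by rw [← Finset.sum_mul, htele n]
        _ ≤ W n * C := by nlinarith [hWpos 0]
    have : ‖y n‖ = (1 / W n) * ‖∑ k ∈ Finset.Icc 1 n, ((W k - W (k - 1) : ℝ) : ℂ) * x k‖ := by
      rw [hy]
      rw [norm_mul]
      congr 1
      rw [norm_div, norm_one, Complex.norm_real, Real.norm_eq_abs, abs_of_pos hWn]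
    rw [this]
    calc (1 / W n) * ‖∑ k ∈ Finset.Icc 1 n, ((W k - W (k - 1) : ℝ) : ℂ) * x k‖
        ≤ (1 / W n) * (W n * C) := by
          exact mul_le_mul_of_nonneg_left hS (by positivity)
      _ = C := by field_simp
  -- recurrence for y
  have hyrec : ∀ n, y (n+1)
      = ((W n / W (n+1) : ℝ) : ℂ) * y n + ((1 - W n / W (n+1) : ℝ) : ℂ) * x (n+1) := by
    intro n
    have hWn : (W n : ℂ) ≠ 0 := Complex.ofReal_ne_zero.mpr (hWpos n).ne'
    have hWn1 : (W (n+1) : ℂ) ≠ 0 := Complex.ofReal_ne_zero.mpr (hWpos (n+1)).ne'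
    simp only [hy]
    rw [Finset.sum_Icc_succ_top (by omega : 1 ≤ n+1)]
    simp only [Nat.add_sub_cancel]
    push_cast
    field_simp
  -- convergence of the ratio
  have hρ : Tendsto (fun n => W n / W (n+1)) atTop (nhds l) := by
    have := hlim.comp (tendsto_add_atTop_nat 1)
    simpa [Function.comp_def] using this
  -- shifted averages of x converge to L
  have hrC : (r : ℂ) ≠ 0 := Complex.ofReal_ne_zero.mpr (ne_of_gt hr0)
  have hs : Tendsto (fun N => binAvg r N (fun n => x (n+1))) atTop (nhds L) := by
    have h2 : Tendsto (fun N => (r:ℂ) * binAvg r N (fun n => x (n+1)))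
        atTop (nhds ((r:ℂ) * L)) := by
      have hfn : (fun N => (r:ℂ) * binAvg r N (fun n => x (n+1)))
          = fun N => binAvg r (N+1) x - ((1:ℂ) - r) * binAvg r N x := by
        funext N; rw [binAvg_pascal]; ring
      rw [hfn, show (r:ℂ) * L = L - ((1:ℂ) - r) * L by ring]
      exact (h.comp (tendsto_add_atTop_nat 1)).sub (h.const_mul _)
    have hfn2 : (fun N => binAvg r N (fun n => x (n+1)))
        = fun N => (r:ℂ)⁻¹ * ((r:ℂ) * binAvg r N (fun n => x (n+1))) := by
      funext N; field_simp
    rw [hfn2, show L = (r:ℂ)⁻¹ * ((r:ℂ) * L) by field_simp]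
    exact h2.const_mul _
  -- the error sequences
  set u : ℕ → ℂ := fun n => (((W n / W (n+1)) - l : ℝ) : ℂ) * y n with hu
  set v : ℕ → ℂ := fun n => ((l - (W n / W (n+1)) : ℝ) : ℂ) * x (n+1) with hv
  have hρ01 : ∀ n, 0 < W n / W (n+1) ∧ W n / W (n+1) < 1 := by
    intro n
    constructor
    · exact div_pos (hWpos n) (hWpos (n+1))
    · rw [div_lt_one (hWpos (n+1))]
      exact hW (Nat.lt_succ_self n)
  have hubd : ∀ n, ‖u n‖ ≤ 2 * C := by
    intro n
    simp only [hu]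
    rw [norm_mul, Complex.norm_real, Real.norm_eq_abs]
    have h1 : |W n / W (n+1) - l| ≤ 2 := by
      have := hρ01 n
      rw [abs_le]; constructor <;> nlinarith
    exact mul_le_mul h1 (hyb n) (norm_nonneg _) (by norm_num)
  have hvbd : ∀ n, ‖v n‖ ≤ 2 * C := by
    intro n
    simp only [hv]
    rw [norm_mul, Complex.norm_real, Real.norm_eq_abs]
    have h1 : |l - W n / W (n+1)| ≤ 2 := by
      have := hρ01 n
      rw [abs_le]; constructor <;> nlinarith
    exact mul_le_mul h1 (hC (n+1)) (norm_nonneg _) (by norm_num)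
  have hu0 : Tendsto u atTop (nhds 0) := by
    have hb : ∀ n, ‖u n‖ ≤ |W n / W (n+1) - l| * C := by
      intro n
      simp only [hu]
      rw [norm_mul, Complex.norm_real, Real.norm_eq_abs]
      exact mul_le_mul_of_nonneg_left (hyb n) (abs_nonneg _)
    have hg : Tendsto (fun n => |W n / W (n+1) - l| * C) atTop (nhds 0) := by
      have h1 : Tendsto (fun n => |W n / W (n+1) - l|) atTop (nhds 0) := by
        have := (hρ.sub_const l).abs
        simpa using this
      simpa using h1.mul_const C
    exact squeeze_zero_norm hb hg
  have hv0 : Tendsto v atTop (nhds 0) := by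
    have hb : ∀ n, ‖v n‖ ≤ |l - W n / W (n+1)| * C := by
      intro n
      simp only [hv]
      rw [norm_mul, Complex.norm_real, Real.norm_eq_abs]
      exact mul_le_mul_of_nonneg_left (hC (n+1)) (abs_nonneg _)
    have hg : Tendsto (fun n => |l - W n / W (n+1)| * C) atTop (nhds 0) := by
      have h1 : Tendsto (fun n => |l - W n / W (n+1)|) atTop (nhds 0) := by
        have := ((tendsto_const_nhds (x := l)).sub hρ).abs
        simpa using this
      simpa using h1.mul_const C
    exact squeeze_zero_norm hb hg
  have hbu : Tendsto (fun N => binAvg r N u) atTop (nhds 0) :=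
    binAvg_null ⟨hr0, hr1⟩ u (2*C) hubd hu0
  have hbv : Tendsto (fun N => binAvg r N v) atTop (nhds 0) :=
    binAvg_null ⟨hr0, hr1⟩ v (2*C) hvbd hv0
  -- decomposition of the shifted y-average
  have key : ∀ N, binAvg r N (fun n => y (n+1))
      = (l:ℂ) * binAvg r N y + ((1:ℂ) - (l:ℂ)) * binAvg r N (fun n => x (n+1))
        + (binAvg r N u + binAvg r N v) := by
    intro N
    unfold binAvg
    rw [Finset.mul_sum, Finset.mul_sum, ← Finset.sum_add_distrib, ← Finset.sum_add_distrib,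
      ← Finset.sum_add_distrib]
    refine Finset.sum_congr rfl fun n _ => ?_
    simp only [hu, hv, hyrec]
    push_cast
    ring
  -- the contraction relation
  set q : ℝ := 1 - r * (1 - l) with hqdef
  have hq0 : 0 ≤ q := by nlinarith
  have hq1 : q < 1 := by nlinarith
  have he : Tendsto (fun N => binAvg r (N+1) y - (q:ℂ) * binAvg r N y)
      atTop (nhds (((1:ℂ) - (q:ℂ)) * L)) := by
    have hfn : (fun N => binAvg r (N+1) y - (q:ℂ) * binAvg r N y)
        = fun N => (r:ℂ) * ((1:ℂ) - (l:ℂ)) * binAvg r N (fun n => x (n+1))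
          + (r:ℂ) * (binAvg r N u + binAvg r N v) := by
      funext N
      rw [binAvg_pascal r N y, key N, hqdef]
      push_cast
      ring
    rw [hfn, show ((1:ℂ) - (q:ℂ)) * L
        = (r:ℂ) * ((1:ℂ) - (l:ℂ)) * L + (r:ℂ) * ((0:ℂ) + (0:ℂ)) by
      rw [hqdef]; push_cast; ring]
    exact (hs.const_mul _).add ((hbu.add hbv).const_mul _)
  exact tendsto_of_contract q hq0 hq1 (fun N => binAvg r N y) L C
    (fun N => binAvg_norm_le (le_of_lt hr0) (le_of_lt hr1) N y C hyb) he
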